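/- Let m,n > 1 and X = ℤ/(m) × ℤ/(n) × ℤ/(m) with σ_{(a,b,c)}(x,y,z) = (x−c, y−1, z−δ_{(a,b),(x−c,y−1)}). The permutation group G(X,r) = ⟨σ_{(a,b,c)} : (a,b,c) ∈ X⟩ acts transitively on X; that is, the solution (X,r) is indecomposable. -/

import Mathlib

/-- `σ_{(a,b,c)}(x,y,z) = (x−c, y−1, z−δ_{(a,b),(x−c,y−1)})` on `ℤ/(m) × ℤ/(n) × ℤ/(m)`. -/
def sigmaMN (m n : ℕ) (p q : ZMod m × ZMod n × ZMod m) : ZMod m × ZMod n × ZMod m :=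
  (q.1 - p.2.2, q.2.1 - 1,
    q.2.2 - if (p.1, p.2.1) = (q.1 - p.2.2, q.2.1 - 1) then 1 else 0)

/-- `σ⁻¹_{(a,b,c)}(x,y,z) = (x+c, y+1, z+δ_{(a,b),(x,y)})`. -/
def sigmaMNInv (m n : ℕ) (p q : ZMod m × ZMod n × ZMod m) : ZMod m × ZMod n × ZMod m :=
  (q.1 + p.2.2, q.2.1 + 1,
    q.2.2 + if (p.1, p.2.1) = (q.1, q.2.1) then 1 else 0)

/-- `(Y,s)` is an involutive non-degenerate set-theoretic solution of the YBE. -/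
def IsYBSolution {Y : Type*} (s : Y × Y → Y × Y) : Prop :=
  (∀ x : Y, Function.Bijective fun y => (s (x, y)).1) ∧
  (∀ y : Y, Function.Bijective fun x => (s (x, y)).2) ∧
  (s ∘ s = id) ∧
  ((fun t : Y × Y × Y => ((s (t.1, t.2.1)).1, (s (t.1, t.2.1)).2, t.2.2)) ∘
      (fun t : Y × Y × Y => (t.1, (s (t.2.1, t.2.2)).1, (s (t.2.1, t.2.2)).2)) ∘
      (fun t : Y × Y × Y => ((s (t.1, t.2.1)).1, (s (t.1, t.2.1)).2, t.2.2)) =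
    (fun t : Y × Y × Y => (t.1, (s (t.2.1, t.2.2)).1, (s (t.2.1, t.2.2)).2)) ∘
      (fun t : Y × Y × Y => ((s (t.1, t.2.1)).1, (s (t.1, t.2.1)).2, t.2.2)) ∘
      (fun t : Y × Y × Y => (t.1, (s (t.2.1, t.2.2)).1, (s (t.2.1, t.2.2)).2)))

/-- A solution `(Z,r)` is simple: `|Z| > 1` and every epimorphism of solutions from
`(Z,r)` is either an isomorphism or onto a singleton. -/
def IsSimpleSolution {Z : Type*} (r : Z × Z → Z × Z) : Prop :=
  Nontrivial Z ∧
  ∀ (Y : Type) (s : Y × Y → Y × Y), IsYBSolution s →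
    ∀ f : Z → Y, Function.Surjective f →
      (∀ x y : Z, f ((r (x, y)).1) = (s (f x, f y)).1) →
      Function.Bijective f ∨ Subsingleton Y

def sigmaEquivAux (m n : ℕ) (p : ZMod m × ZMod n × ZMod m) :
    Equiv.Perm (ZMod m × ZMod n × ZMod m) where
  toFun := sigmaMN m n p
  invFun := sigmaMNInv m n p
  left_inv q := by
    simp [sigmaMN, sigmaMNInv, Prod.ext_iff]
  right_inv q := by
    simp [sigmaMN, sigmaMNInv, Prod.ext_iff]

lemma sigmaStepAux (m n : ℕ) (hm : 1 < m) (u : ZMod m × ZMod n × ZMod m)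
    (c e : ZMod m) (he : e = 0 ∨ e = 1) :
    ∃ p, sigmaMN m n p u = (u.1 - c, u.2.1 - 1, u.2.2 - e) := by
  haveI : Fact (1 < m) := ⟨hm⟩
  rcases he with he | he
  · refine ⟨(u.1 - c + 1, u.2.1 - 1, c), ?_⟩
    have h : (u.1 - c + 1, u.2.1 - 1) ≠ (u.1 - c, u.2.1 - 1) := by
      intro h
      have := congrArg Prod.fst h
      simp at this
    simp [sigmaMN, h, he]
  · refine ⟨(u.1 - c, u.2.1 - 1, c), ?_⟩
    simp [sigmaMN, he]

lemma sigmaReachAux (m n : ℕ) (hm : 1 < m) :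
    ∀ (k t : ℕ), t ≤ k + 1 → ∀ (u : ZMod m × ZMod n × ZMod m) (c : ZMod m),
    ∃ g ∈ Subgroup.closure
        {g : Equiv.Perm (ZMod m × ZMod n × ZMod m) | ∃ p, ∀ q, g q = sigmaMN m n p q},
      g u = (u.1 - c, u.2.1 - ((k + 1 : ℕ) : ZMod n), u.2.2 - ((t : ℕ) : ZMod m)) := by
  intro k
  induction k with
  | zero =>
    intro t ht u c
    obtain ⟨p, hp⟩ := sigmaStepAux m n hm u c ((t : ℕ) : ZMod m)
      (by interval_cases t <;> simp)
    exact ⟨sigmaEquivAux m n p, Subgroup.subset_closure ⟨p, fun q => rfl⟩,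
      by have hp' : (sigmaEquivAux m n p) u = _ := hp; simpa using hp'⟩
  | succ k ih =>
    intro t ht u c
    rcases Nat.lt_or_ge t (k + 2) with h | h
    · -- first step with e = 0
      obtain ⟨p, hp⟩ := sigmaStepAux m n hm u 0 0 (Or.inl rfl)
      set u' : ZMod m × ZMod n × ZMod m := (u.1 - 0, u.2.1 - 1, u.2.2 - 0) with hu'
      obtain ⟨g, hg, hgu⟩ := ih t (by omega) u' c
      refine ⟨g * sigmaEquivAux m n p, mul_mem hg (Subgroup.subset_closure ⟨p, fun q => rfl⟩), ?_⟩
      have : (sigmaEquivAux m n p) u = u' := hp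
      rw [Equiv.Perm.mul_apply, this, hgu]
      refine Prod.ext ?_ (Prod.ext ?_ ?_) <;> simp [hu'] <;> push_cast <;> ring
    · -- t = k + 2, first step with e = 1
      have ht2 : t = k + 2 := by omega
      obtain ⟨p, hp⟩ := sigmaStepAux m n hm u 0 1 (Or.inr rfl)
      set u' : ZMod m × ZMod n × ZMod m := (u.1 - 0, u.2.1 - 1, u.2.2 - 1) with hu'
      obtain ⟨g, hg, hgu⟩ := ih (k + 1) (by omega) u' c
      refine ⟨g * sigmaEquivAux m n p, mul_mem hg (Subgroup.subset_closure ⟨p, fun q => rfl⟩), ?_⟩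
      have : (sigmaEquivAux m n p) u = u' := hp
      rw [Equiv.Perm.mul_apply, this, hgu]
      subst ht2
      refine Prod.ext ?_ (Prod.ext ?_ ?_) <;> simp [hu'] <;> push_cast <;> ring

/-- The permutation group `⟨σ_{(a,b,c)}⟩` acts transitively on `X`:
the solution is indecomposable. -/
theorem sigmaMN_indecomposable (m n : ℕ) (hm : 1 < m) (hn : 1 < n) :
    ∀ u v : ZMod m × ZMod n × ZMod m,
      ∃ g ∈ Subgroup.closure
          {g : Equiv.Perm (ZMod m × ZMod n × ZMod m) | ∃ p, ∀ q, g q = sigmaMN m n p q},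
        g u = v := by
  haveI : NeZero m := ⟨by omega⟩
  haveI : NeZero n := ⟨by omega⟩
  intro u v
  set K : ℕ := (u.2.1 - v.2.1).val + n * m with hK
  have h0 : 0 < n * m := by positivity
  have hK1 : 1 ≤ K := by omega
  set t : ℕ := (u.2.2 - v.2.2).val with htdef
  have htK : t ≤ (K - 1) + 1 := by
    have h1 : t < m := ZMod.val_lt _
    have h2 : m ≤ n * m := Nat.le_mul_of_pos_left m (by omega)
    omega
  obtain ⟨g, hg, hgu⟩ := sigmaReachAux m n hm (K - 1) t htK u (u.1 - v.1)
  refine ⟨g, hg, ?_⟩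
  rw [hgu]
  have hKcast : (((K - 1) + 1 : ℕ) : ZMod n) = u.2.1 - v.2.1 := by
    have : (K - 1) + 1 = K := by omega
    rw [this, hK]
    push_cast
    simp [ZMod.natCast_val, ZMod.cast_id, ZMod.natCast_self]
  have htcast : ((t : ℕ) : ZMod m) = u.2.2 - v.2.2 := by
    rw [htdef]; simp [ZMod.natCast_val, ZMod.cast_id]
  rw [hKcast, htcast]
  exact Prod.ext (by ring) (Prod.ext (by simp) (by simp))
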